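/- Let ℓ ≥ 2r with r ≥ 2 and let m be the unique maximizer of f(k) = (k−1)_{r−1}/k^{ℓ−1} over integers k ≥ r (so m < 4r/3). Define H(q) = (m−q)·(q)_{r−1} for integers 0 ≤ q ≤ m. Then H(q) < H(m−1) for every integer q ∈ [0, m] with q ≠ m−1. -/

import Mathlib

private lemma bern_aux (x : ℝ) (h0 : 0 ≤ x) (h1 : x ≤ 1) :
    ∀ n : ℕ, (1 - x) ^ n ≤ 1 - n * x + n * (n - 1) / 2 * x ^ 2 := by
  intro n
  induction n with
  | zero => norm_num
  | succ n ih =>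
    have hx : (0:ℝ) ≤ 1 - x := by linarith
    have h2 : (1 - x) ^ (n + 1) = (1 - x) ^ n * (1 - x) := pow_succ _ _
    have h3 : (1 - x) ^ n * (1 - x) ≤ (1 - n * x + n * (n - 1) / 2 * x ^ 2) * (1 - x) :=
      mul_le_mul_of_nonneg_right ih hx
    have hn : (0:ℝ) ≤ (n:ℝ) := Nat.cast_nonneg n
    have hx3 : (0:ℝ) ≤ x ^ 3 := by positivity
    have h4 : 0 ≤ (n:ℝ) * ((n:ℝ) - 1) := by
      rcases Nat.eq_zero_or_pos n with h | h
      · subst h; norm_num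
      · have : (1:ℝ) ≤ (n:ℝ) := by exact_mod_cast h
        nlinarith
    rw [h2]
    push_cast
    nlinarith [h3, mul_nonneg h4 hx3]

private lemma keyB (r ℓ m : ℕ) (hr : 2 ≤ r) (hℓ : 2 * r ≤ ℓ) (hm : 2 * r - 1 ≤ m) :
    ((m:ℝ) - 1) ^ ℓ ≤ ((m:ℝ) - r) * (m:ℝ) ^ (ℓ - 1) := by
  have hm3 : (3:ℕ) ≤ m := by omega
  have hM : (3:ℝ) ≤ (m:ℝ) := by exact_mod_cast hm3
  have hMpos : (0:ℝ) < (m:ℝ) := by linarith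
  have hmr : (2 * (r:ℝ) - 1) ≤ (m:ℝ) := by
    have : ((2 * r - 1 : ℕ) : ℝ) ≤ (m:ℝ) := by exact_mod_cast hm
    push_cast [Nat.cast_sub (by omega : 1 ≤ 2 * r)] at this
    linarith
  set x : ℝ := 1 / (m:ℝ) with hxdef
  have hx0 : 0 ≤ x := by positivity
  have hx1 : x ≤ 1 := by
    rw [hxdef]; rw [div_le_one hMpos]; linarith
  have hb := bern_aux x hx0 hx1 (2 * r)
  have hstep : 1 - (2 * r : ℕ) * x + (2 * r : ℕ) * ((2 * r : ℕ) - 1) / 2 * x ^ 2 ≤ 1 - r * x := by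
    push_cast
    have hxm : x * (m:ℝ) = 1 := by
      rw [hxdef]; field_simp
    have hrpos : (2:ℝ) ≤ (r:ℝ) := by exact_mod_cast hr
    -- need r*(2r-1)*x^2 ≤ r*x, i.e. (2r-1)*x ≤ 1, i.e. 2r-1 ≤ m
    have h1 : (2 * (r:ℝ) - 1) * x ≤ 1 := by
      calc (2 * (r:ℝ) - 1) * x ≤ (m:ℝ) * x := by
            apply mul_le_mul_of_nonneg_right hmr hx0
        _ = 1 := by rw [mul_comm]; exact hxm
    nlinarith [mul_nonneg (by linarith : (0:ℝ) ≤ (r:ℝ)) hx0, sq_nonneg x,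
      mul_le_mul_of_nonneg_left h1 (mul_nonneg (by linarith : (0:ℝ) ≤ (r:ℝ)) hx0)]
  have hpow : (1 - x) ^ ℓ ≤ (1 - x) ^ (2 * r) :=
    pow_le_pow_of_le_one (by linarith) (by linarith) hℓ
  have hkey : (1 - x) ^ ℓ ≤ 1 - r * x := le_trans hpow (le_trans hb hstep)
  have hMx : (m:ℝ) * (1 - x) = (m:ℝ) - 1 := by
    rw [hxdef]; field_simp
  have hℓ1 : ℓ - 1 + 1 = ℓ := by omega
  calc ((m:ℝ) - 1) ^ ℓ = ((m:ℝ) * (1 - x)) ^ ℓ := by rw [hMx]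
    _ = (m:ℝ) ^ ℓ * (1 - x) ^ ℓ := mul_pow _ _ _
    _ ≤ (m:ℝ) ^ ℓ * (1 - r * x) := by
        apply mul_le_mul_of_nonneg_left hkey (by positivity)
    _ = ((m:ℝ) - r) * (m:ℝ) ^ (ℓ - 1) := by
        rw [← hℓ1, pow_succ]
        have : (m:ℝ) * (1 - r * x) = (m:ℝ) - r := by
          rw [hxdef]; field_simp
        calc (m:ℝ) ^ (ℓ - 1) * (m:ℝ) * (1 - (r:ℝ) * x)
            = (m:ℝ) ^ (ℓ - 1) * ((m:ℝ) * (1 - (r:ℝ) * x)) := by ring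
          _ = ((m:ℝ) - r) * (m:ℝ) ^ (ℓ - 1) := by rw [this]; ring

/-- For `ℓ ≥ 2r` and `m` the unique maximizer of `f`, the function
`H(q) = (m−q)·(q)_{r−1}` satisfies `H(q) < H(m−1)` for all `q ≤ m`, `q ≠ m − 1`. -/
theorem H_max_at_m_sub_one (r ℓ m : ℕ) (hr : 2 ≤ r) (hℓ : 2 * r ≤ ℓ)
    (f : ℕ → ℝ)
    (hf : ∀ k, f k = (∏ i ∈ Finset.range (r - 1), ((k : ℝ) - (i + 1))) / (k : ℝ) ^ (ℓ - 1))
    (hm : r ≤ m ∧ ∀ k, r ≤ k → k ≠ m → f k < f m)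
    (H : ℕ → ℕ)
    (hH : ∀ q, H q = (m - q) * Nat.descFactorial q (r - 1)) :
    ∀ q : ℕ, q ≤ m → q ≠ m - 1 → H q < H (m - 1) := by
  obtain ⟨hrm, hmax⟩ := hm
  -- Step 1: m ≤ 2r - 2
  have hm2 : m ≤ 2 * r - 2 := by
    by_contra hcon
    have hm1 : 2 * r - 1 ≤ m := by omega
    have hfm : f (m - 1) < f m := hmax (m - 1) (by omega) (by omega)
    rw [hf, hf] at hfm
    have hcast : ((m - 1 : ℕ) : ℝ) = (m:ℝ) - 1 := by
      push_cast [Nat.cast_sub (by omega : 1 ≤ m)]; ring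
    rw [hcast] at hfm
    have hMbig : (2 * (r:ℝ) - 1) ≤ (m:ℝ) := by
      have : ((2 * r - 1 : ℕ) : ℝ) ≤ (m:ℝ) := Nat.cast_le.mpr hm1
      push_cast [Nat.cast_sub (by omega : 1 ≤ 2 * r)] at this
      linarith
    set M : ℝ := (m:ℝ) with hMdef
    have hr2 : (2:ℝ) ≤ (r:ℝ) := by exact_mod_cast hr
    set P1 : ℝ := ∏ i ∈ Finset.range (r - 1), (M - (i + 1)) with hP1def
    set P2 : ℝ := ∏ i ∈ Finset.range (r - 1), (M - 1 - (i + 1)) with hP2def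
    have hP1pos : 0 < P1 := by
      apply Finset.prod_pos
      intro i hi
      have hi' : i + 1 ≤ r - 1 := Finset.mem_range.mp hi
      have : ((i:ℝ) + 1) ≤ (r:ℝ) - 1 := by
        have : ((i + 1 : ℕ) : ℝ) ≤ ((r - 1 : ℕ) : ℝ) := by exact_mod_cast hi'
        push_cast [Nat.cast_sub (by omega : 1 ≤ r)] at this
        linarith
      linarith
    have hP2pos : 0 < P2 := by
      apply Finset.prod_pos
      intro i hi
      have hi' : i + 1 ≤ r - 1 := Finset.mem_range.mp hi
      have : ((i:ℝ) + 1) ≤ (r:ℝ) - 1 := by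
        have : ((i + 1 : ℕ) : ℝ) ≤ ((r - 1 : ℕ) : ℝ) := by exact_mod_cast hi'
        push_cast [Nat.cast_sub (by omega : 1 ≤ r)] at this
        linarith
      linarith
    -- key product identity
    have hid : P1 * (M - r) = (M - 1) * P2 := by
      have hr1 : r - 1 = (r - 2) + 1 := by omega
      have e1 : P1 = (∏ i ∈ Finset.range (r - 2), (M - (i + 2))) * (M - 1) := by
        rw [hP1def, hr1, Finset.prod_range_succ']
        congr 1
        · apply Finset.prod_congr rfl
          intro i _
          push_cast
          ring
        · norm_num
      have e2 : P2 = (∏ i ∈ Finset.range (r - 2), (M - (i + 2))) * (M - r) := by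
        rw [hP2def, hr1, Finset.prod_range_succ]
        congr 1
        · apply Finset.prod_congr rfl
          intro i _
          ring
        · have : ((r - 2 : ℕ) : ℝ) = (r:ℝ) - 2 := by
            push_cast [Nat.cast_sub (by omega : 2 ≤ r)]; ring
          rw [this]; ring
      rw [e1, e2]; ring
    -- extract the numeric inequality
    have hMpos : (0:ℝ) < M := by linarith
    have hM1pos : (0:ℝ) < M - 1 := by linarith
    have hpow1 : (0:ℝ) < M ^ (ℓ - 1) := by positivity
    have hpow2 : (0:ℝ) < (M - 1) ^ (ℓ - 1) := by positivity
    rw [div_lt_div_iff₀ hpow2 hpow1] at hfm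
    -- hfm : P2 * M ^ (ℓ-1) < P1 * (M-1) ^ (ℓ-1)
    have hℓ1 : ℓ - 1 + 1 = ℓ := by omega
    have hfm2 : P1 * ((M - r) * M ^ (ℓ - 1)) < P1 * ((M - 1) ^ ℓ) := by
      have := mul_lt_mul_of_pos_left hfm hM1pos
      calc P1 * ((M - r) * M ^ (ℓ - 1)) = (P1 * (M - r)) * M ^ (ℓ - 1) := by ring
        _ = (M - 1) * (P2 * M ^ (ℓ - 1)) := by rw [hid]; ring
        _ < (M - 1) * (P1 * (M - 1) ^ (ℓ - 1)) := this
        _ = P1 * ((M - 1) ^ (ℓ - 1) * (M - 1)) := by ring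
        _ = P1 * ((M - 1) ^ ℓ) := by rw [← pow_succ, hℓ1]
    have hfin : (M - r) * M ^ (ℓ - 1) < (M - 1) ^ ℓ :=
      lt_of_mul_lt_mul_left hfm2 (le_of_lt hP1pos)
    exact absurd hfin (not_lt.mpr (keyB r ℓ m hr hℓ hm1))
  -- Step 2: combinatorics with r ≤ m ≤ 2r - 2
  have hDpos : 0 < Nat.descFactorial (m - 1) (r - 1) := by
    rcases Nat.eq_zero_or_pos (Nat.descFactorial (m - 1) (r - 1)) with h | h
    · exfalso
      have := Nat.descFactorial_eq_zero_iff_lt.mp h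
      omega
    · exact h
  have hHm1 : H (m - 1) = Nat.descFactorial (m - 1) (r - 1) := by
    rw [hH, show m - (m - 1) = 1 by omega, one_mul]
  -- one-step increase
  have step : ∀ q, r - 1 ≤ q → q + 1 ≤ m - 1 → H q < H (q + 1) := by
    intro q hq1 hq2
    rw [hH, hH]
    obtain ⟨s, rfl⟩ : ∃ s, r = s + 2 := ⟨r - 2, by omega⟩
    have hsr : s + 2 - 1 = s + 1 := by omega
    rw [hsr]
    rw [Nat.descFactorial_succ, Nat.succ_descFactorial_succ]
    have hD : 0 < Nat.descFactorial q s := by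
      rcases Nat.eq_zero_or_pos (Nat.descFactorial q s) with h | h
      · exfalso
        have := Nat.descFactorial_eq_zero_iff_lt.mp h
        omega
      · exact h
    have key : (m - q) * (q - s) < (m - (q + 1)) * (q + 1) := by
      obtain ⟨b, rfl⟩ : ∃ b, q = s + b := ⟨q - s, by omega⟩
      obtain ⟨a, rfl⟩ : ∃ a, m = (s + b) + a := ⟨m - (s + b), by omega⟩
      have h1 : s + b + a - (s + b) = a := by omega
      have h2 : s + b - s = b := by omega
      have h3 : s + b + a - (s + b + 1) = a - 1 := by omega
      rw [h1, h2, h3]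
      have ha : 2 ≤ a := by omega
      have hb1 : 1 ≤ b := by omega
      have hbs : b ≤ s := by omega
      obtain ⟨c, rfl⟩ : ∃ c, a = c + 2 := ⟨a - 2, by omega⟩
      have h4 : c + 2 - 1 = c + 1 := by omega
      rw [h4]
      nlinarith
    calc (m - q) * ((q - s) * Nat.descFactorial q s)
        = ((m - q) * (q - s)) * Nat.descFactorial q s := by ring
      _ < ((m - (q + 1)) * (q + 1)) * Nat.descFactorial q s := by
          exact mul_lt_mul_of_pos_right key hD
      _ = (m - (q + 1)) * ((q + 1) * Nat.descFactorial q s) := by ring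
  -- chain of increases
  have chain : ∀ d q, r - 1 ≤ q → q + (d + 1) = m - 1 → H q < H (m - 1) := by
    intro d
    induction d with
    | zero =>
      intro q hq hqe
      have h := step q hq (by omega)
      rwa [show q + 1 = m - 1 by omega] at h
    | succ d ih =>
      intro q hq hqe
      exact lt_trans (step q hq (by omega)) (ih (q + 1) (by omega) (by omega))
  -- conclusion
  intro q hqm hne
  by_cases hq : q = m
  · rw [hH, hHm1, show m - q = 0 by omega, zero_mul]
    exact hDpos
  · have hqlt : q + 1 ≤ m - 1 := by omega
    by_cases hqr : q < r - 1
    · rw [hH, hHm1, Nat.descFactorial_eq_zero_iff_lt.mpr hqr, mul_zero]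
      exact hDpos
    · exact chain (m - 1 - q - 1) q (by omega) (by omega)
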